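/- arXiv:0909.2068 — 3 statements merged into one kernel-verified Lean document; each statement's English description precedes it below -/
import Mathlib

section
/- Let A be a ring and suppose V is a left A-module that is an internal direct sum of a family of simple submodules (Vᵢ)_{i∈I} and also an internal direct sum of a family of simple submodules (Wⱼ)_{j∈J}. Then there is a bijection σ : I → J such that Vᵢ is isomorphic as an A-module to W_{σ(i)} for every i ∈ I. -/
open DirectSum

section Precomp

variable {A S V : Type*} [Ring A] [AddCommGroup S] [Module A S]
  [AddCommGroup V] [Module A V]

/-- Right action of `End A S` on `S →ₗ[A] V` by precomposition. -/
instance precompSMul : SMul (Module.End A S)ᵐᵒᵖ (S →ₗ[A] V) :=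
  ⟨fun d f => f ∘ₗ d.unop⟩

lemma precomp_smul_def (d : (Module.End A S)ᵐᵒᵖ) (f : S →ₗ[A] V) :
    d • f = f ∘ₗ d.unop := rfl

instance precompModule : Module (Module.End A S)ᵐᵒᵖ (S →ₗ[A] V) where
  one_smul f := LinearMap.comp_id f
  mul_smul a b f := by
    simp only [precomp_smul_def, MulOpposite.unop_mul]
    rfl
  smul_zero d := LinearMap.zero_comp d.unop
  smul_add d f g := LinearMap.add_comp _ _ _
  add_smul a b f := by
    simp only [precomp_smul_def, MulOpposite.unop_add]
    ext s
    simp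
  zero_smul f := by
    simp only [precomp_smul_def, MulOpposite.unop_zero]
    ext s
    simp

end Precomp

section Aux

variable {A V : Type*} [Ring A] [AddCommGroup V] [Module A V]
  {I : Type*} [DecidableEq I] {S : Type*} [AddCommGroup S] [Module A S]

/-- The canonical maps `S → Vᵢ ↪ V` (for `i` with `S ≅ Vᵢ`) form a basis of
`Hom_A(S, V)` over `(End A S)ᵐᵒᵖ` when `V` is the internal direct sum of simple
submodules `Vᵢ` and `S` is simple. -/
noncomputable def auxBasis (Vi : I → Submodule A V) (hVi : DirectSum.IsInternal Vi)
    (hViS : ∀ i, IsSimpleModule A (Vi i)) [IsSimpleModule A S] :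
    Module.Basis {i // Nonempty (S ≃ₗ[A] Vi i)} (Module.End A S)ᵐᵒᵖ (S →ₗ[A] V) := by
  classical
  set e := LinearEquiv.ofBijective (DirectSum.coeLinearMap Vi) hVi with he
  set π : ∀ i, V →ₗ[A] Vi i :=
    fun i => (DirectSum.component A I (fun i => ↥(Vi i)) i) ∘ₗ e.symm.toLinearMap with hπ
  have hπ_apply : ∀ (i : I) (x : V), π i x = e.symm x i := fun i x => rfl
  have hπ_mem : ∀ (i : I) (x : V) (hx : x ∈ Vi i), π i x = ⟨x, hx⟩ := fun i x hx =>
    hVi.ofBijective_coeLinearMap_of_mem hx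
  have hπ_ne : ∀ {i j : I} (_ : i ≠ j) (x : V), x ∈ Vi i → π j x = 0 :=
    fun {i j} hij x hx => hVi.ofBijective_coeLinearMap_of_mem_ne hij hx
  set b : {i // Nonempty (S ≃ₗ[A] Vi i)} → (S →ₗ[A] V) :=
    fun i => (Vi i.1).subtype ∘ₗ (Classical.choice i.2).toLinearMap with hb
  have hbval : ∀ (i : {i // Nonempty (S ≃ₗ[A] Vi i)}) (s : S),
      b i s ∈ Vi i.1 := fun i s => ((Classical.choice i.2) s).2
  have hπb : ∀ (i : {i // Nonempty (S ≃ₗ[A] Vi i)}) (s : S),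
      π i.1 (b i s) = (Classical.choice i.2) s := by
    intro i s
    rw [hπ_mem i.1 (b i s) (hbval i s)]
    exact Subtype.ext rfl
  apply Module.Basis.mk (v := b)
  · -- linear independence
    rw [linearIndependent_iff']
    intro t g hsum i₀ hi₀
    have key : ∀ s : S, (g i₀).unop s = 0 := by
      intro s
      have h1 : π i₀.1 ((∑ i ∈ t, g i • b i) s) = 0 := by rw [hsum]; simp
      rw [LinearMap.sum_apply] at h1
      rw [map_sum] at h1
      have h2 : ∀ i ∈ t, i ≠ i₀ → π i₀.1 ((g i • b i) s) = 0 := by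
        intro i _ hne
        rw [precomp_smul_def]
        exact hπ_ne (fun h => hne (Subtype.ext h)) _ (hbval i ((g i).unop s))
      rw [Finset.sum_eq_single_of_mem i₀ hi₀ (fun i hi hne => h2 i hi hne)] at h1
      rw [precomp_smul_def] at h1
      have h3 : (Classical.choice i₀.2) ((g i₀).unop s) = 0 :=
        (hπb i₀ ((g i₀).unop s)).symm.trans h1
      exact (Classical.choice i₀.2).injective (by simpa using h3)
    exact MulOpposite.unop_injective (LinearMap.ext key)
  · -- spanning
    rintro f -
    haveI : Nontrivial S := IsSimpleModule.nontrivial A S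
    obtain ⟨x, hx⟩ := exists_ne (0 : S)
    have hspan : Submodule.span A ({x} : Set S) = ⊤ := by
        rcases eq_bot_or_eq_top (Submodule.span A ({x} : Set S)) with h | h
        · exact absurd (by simpa [h] using Submodule.mem_span_singleton_self (R := A) x) hx
        · exact h
    set T : Finset I := (e.symm (f x)).support with hT
    have hrecon : f x = ∑ i ∈ T, ((e.symm (f x)) i : V) := by
      conv_lhs => rw [← e.apply_symm_apply (f x)]
      rw [he]
      conv_lhs => rw [show ∀ y, (LinearEquiv.ofBijective (coeLinearMap Vi) hVi) y = coeLinearMap Vi y from fun y => rfl,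
        ← DirectSum.sum_support_of (e.symm (f x))]
      rw [map_sum]
      exact Finset.sum_congr rfl fun i _ => DirectSum.coeLinearMap_of Vi i _
    have hfg : f = ∑ i ∈ T, (Vi i).subtype ∘ₗ (π i ∘ₗ f) := by
      apply LinearMap.ext
      intro s
      have hs : s ∈ Submodule.span A ({x} : Set S) := hspan ▸ Submodule.mem_top
      obtain ⟨a, rfl⟩ := Submodule.mem_span_singleton.mp hs
      rw [map_smul, LinearMap.sum_apply]
      have : ∀ i ∈ T, ((Vi i).subtype ∘ₗ (π i ∘ₗ f)) (a • x)
          = a • ((e.symm (f x)) i : V) := by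
        intro i _
        simp only [LinearMap.comp_apply, map_smul, hπ_apply]
        rfl
      rw [Finset.sum_congr rfl this, ← Finset.smul_sum, ← hrecon]
    rw [hfg]
    apply Submodule.sum_mem
    intro i _
    rcases eq_or_ne (π i ∘ₗ f) 0 with h0 | h0
    · rw [h0, LinearMap.comp_zero]
      exact Submodule.zero_mem _
    · have hbij := LinearMap.bijective_of_ne_zero h0
      have hiso : Nonempty (S ≃ₗ[A] Vi i) := ⟨LinearEquiv.ofBijective _ hbij⟩
      set j : {i // Nonempty (S ≃ₗ[A] Vi i)} := ⟨i, hiso⟩ with hj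
      have : (Vi i).subtype ∘ₗ (π i ∘ₗ f) =
          (MulOpposite.op ((Classical.choice j.2).symm.toLinearMap ∘ₗ (π i ∘ₗ f) :
            Module.End A S)) • b j := by
        rw [precomp_smul_def, MulOpposite.unop_op, hb]
        ext s
        simp
      rw [this]
      exact Submodule.smul_mem _ _ (Submodule.subset_span (Set.mem_range_self j))

end Aux

/-- If `V` is an internal direct sum of simple submodules `(Vᵢ)` and also of
simple submodules `(Wⱼ)`, there is a bijection `σ : I ≃ J` with `Vᵢ ≅ W_{σ i}`. -/
theorem internal_direct_sum_simple_unique {A V : Type*} [Ring A] [AddCommGroup V]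
    [Module A V] {I J : Type*} [DecidableEq I] [DecidableEq J] (Vi : I → Submodule A V) (Wj : J → Submodule A V)
    (hVi : DirectSum.IsInternal Vi) (hWj : DirectSum.IsInternal Wj)
    (hViS : ∀ i, IsSimpleModule A (Vi i)) (hWjS : ∀ j, IsSimpleModule A (Wj j)) :
    ∃ σ : I ≃ J, ∀ i, Nonempty (↥(Vi i) ≃ₗ[A] ↥(Wj (σ i))) := by
  classical
  -- the key cardinality fact, via bases of `Hom_A(S, V)` over `(End A S)ᵐᵒᵖ`
  have key : ∀ (S : Type _) [AddCommGroup S] [Module A S] [IsSimpleModule A S],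
      Nonempty ({i // Nonempty (S ≃ₗ[A] Vi i)} ≃ {j // Nonempty (S ≃ₗ[A] Wj j)}) := by
    intro S _ _ _
    letI : DivisionRing (Module.End A S) := Module.End.instDivisionRing
    exact ⟨(auxBasis Vi hVi hViS).indexEquiv (auxBasis Wj hWj hWjS)⟩
  -- the setoid of submodules up to isomorphism
  let r : Setoid (Submodule A V) :=
    ⟨fun p q => Nonempty (↥p ≃ₗ[A] ↥q),
      ⟨fun p => ⟨LinearEquiv.refl A p⟩, fun ⟨e⟩ => ⟨e.symm⟩, fun ⟨e⟩ ⟨f⟩ => ⟨e.trans f⟩⟩⟩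
  have fib : ∀ c : Quotient r,
      Nonempty ({i // Quotient.mk r (Vi i) = c} ≃ {j // Quotient.mk r (Wj j) = c}) := by
    intro c
    have transfer : ∀ (S : Type _) [AddCommGroup S] [Module A S] [IsSimpleModule A S]
        (_ : ∀ i, (Quotient.mk r (Vi i) = c ↔ Nonempty (S ≃ₗ[A] Vi i)))
        (_ : ∀ j, (Quotient.mk r (Wj j) = c ↔ Nonempty (S ≃ₗ[A] Wj j))),
        Nonempty ({i // Quotient.mk r (Vi i) = c} ≃ {j // Quotient.mk r (Wj j) = c}) := by
      intro S _ _ _ h1 h2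
      obtain ⟨E⟩ := key S
      exact ⟨(Equiv.subtypeEquivRight h1).trans (E.trans (Equiv.subtypeEquivRight h2).symm)⟩
    by_cases hI : ∃ i₀, Quotient.mk r (Vi i₀) = c
    · obtain ⟨i₀, hi₀⟩ := hI
      refine transfer ↥(Vi i₀) (fun i => ?_) (fun j => ?_) <;>
        rw [← hi₀] <;>
        exact ⟨fun h => (Quotient.exact h).elim fun e => ⟨e.symm⟩,
          fun ⟨e⟩ => Quotient.sound ⟨e.symm⟩⟩
    · by_cases hJ : ∃ j₀, Quotient.mk r (Wj j₀) = c
      · obtain ⟨j₀, hj₀⟩ := hJ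
        refine transfer ↥(Wj j₀) (fun i => ?_) (fun j => ?_) <;>
          rw [← hj₀] <;>
          exact ⟨fun h => (Quotient.exact h).elim fun e => ⟨e.symm⟩,
            fun ⟨e⟩ => Quotient.sound ⟨e.symm⟩⟩
      · push_neg at hI hJ
        haveI : IsEmpty {i // Quotient.mk r (Vi i) = c} := ⟨fun i => hI i.1 i.2⟩
        haveI : IsEmpty {j // Quotient.mk r (Wj j) = c} := ⟨fun j => hJ j.1 j.2⟩
        exact ⟨Equiv.equivOfIsEmpty _ _⟩
  refine ⟨Equiv.ofFiberEquiv (f := fun i => Quotient.mk r (Vi i))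
    (g := fun j => Quotient.mk r (Wj j)) (fun c => (fib c).some), fun i => ?_⟩
  have := Equiv.ofFiberEquiv_map (f := fun i => Quotient.mk r (Vi i))
    (g := fun j => Quotient.mk r (Wj j)) (fun c => (fib c).some) i
  exact (Quotient.exact this.symm).elim fun e => ⟨e⟩
end

section
/- Let A be a ring and U a simple left A-module. For index sets I and J, the direct sums ⊕_{i∈I} U and ⊕_{j∈J} U are isomorphic as A-modules if and only if I and J have the same cardinality. -/
open DirectSum

universe u

section Aux

variable {A U : Type*} [Ring A] [AddCommGroup U] [Module A U]

instance instNonAssocSemiringEndDMA : NonAssocSemiring (Module.End A U)ᵈᵐᵃ :=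
  Semiring.toNonAssocSemiring

/-- For a simple module `U`, `Hom_A(U, ⊕_I U)` is isomorphic, as a right module over the
endomorphism ring of `U` (encoded via `ᵈᵐᵃ`), to the free module `I →₀ (Module.End A U)ᵈᵐᵃ`. -/
noncomputable def simpleHomEquiv (hU : IsSimpleModule A U) (I : Type u) :
    (U →ₗ[A] (⨁ _ : I, U)) ≃ₗ[(Module.End A U)ᵈᵐᵃ] (I →₀ (Module.End A U)ᵈᵐᵃ) := by
  classical
  haveI := hU
  haveI : Nontrivial U := IsSimpleModule.nontrivial A U
  set u₀ : U := (exists_ne (0 : U)).choose with hu₀def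
  have hu₀ : u₀ ≠ 0 := (exists_ne (0 : U)).choose_spec
  have hgen : ∀ x : U, ∃ a : A, a • u₀ = x := by
    intro x
    obtain ⟨a, ha⟩ := IsSimpleModule.toSpanSingleton_surjective A hu₀ x
    exact ⟨a, ha⟩
  have hz : ∀ (g : U →ₗ[A] ⨁ _ : I, U) (i : I), g u₀ i = 0 → ∀ x, g x i = 0 := by
    intro g i h x
    obtain ⟨a, rfl⟩ := hgen x
    rw [map_smul, DFinsupp.smul_apply, h, smul_zero]
  refine
    { toFun := fun g => Finsupp.onFinset (DFinsupp.support (g u₀))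
        (fun i => DomMulAct.mk ((DirectSum.component A I (fun _ => U) i) ∘ₗ g)) ?_
      map_add' := ?_
      map_smul' := ?_
      invFun := fun f => f.sum fun i c =>
        (DirectSum.lof A I (fun _ => U) i) ∘ₗ (DomMulAct.mk.symm c)
      left_inv := ?_
      right_inv := ?_ }
  · intro i hi
    rename_i g
    rw [DFinsupp.mem_support_iff]
    intro h0
    apply hi
    have hc : (DirectSum.component A I (fun _ => U) i) ∘ₗ g = 0 := by
      ext x
      exact hz g i h0 x
    show DomMulAct.mk ((DirectSum.component A I (fun _ => U) i) ∘ₗ g) = 0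
    rw [hc]
    rfl
  · intro g₁ g₂
    ext i
    simp only [Finsupp.onFinset_apply, Finsupp.add_apply]
    rw [LinearMap.comp_add]
    rfl
  · intro c g
    ext i
    obtain ⟨φ, rfl⟩ := DomMulAct.mk.surjective c
    simp only [Finsupp.onFinset_apply, RingHom.id_apply, Finsupp.smul_apply, smul_eq_mul]
    rw [show DomMulAct.mk φ * DomMulAct.mk ((DirectSum.component A I (fun _ => U) i) ∘ₗ g)
        = DomMulAct.mk (((DirectSum.component A I (fun _ => U) i) ∘ₗ g) * φ) from rfl]
    congr 1
  · intro g
    ext x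
    dsimp only
    rw [Finsupp.sum, LinearMap.sum_apply]
    rename_i j
    rw [DFinsupp.finset_sum_apply]
    simp only [Finsupp.onFinset_apply, Equiv.symm_apply_apply, LinearMap.comp_apply]
    by_cases hj : j ∈ (Finsupp.onFinset (DFinsupp.support (g u₀))
        (fun i => DomMulAct.mk ((DirectSum.component A I (fun _ => U) i) ∘ₗ g))
        (by
          intro i hi
          rw [DFinsupp.mem_support_iff]
          intro h0
          apply hi
          have hc : (DirectSum.component A I (fun _ => U) i) ∘ₗ g = 0 := by
            ext y
            exact hz g i h0 y
          show DomMulAct.mk ((DirectSum.component A I (fun _ => U) i) ∘ₗ g) = 0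
          rw [hc]
          rfl)).support
    · rw [Finset.sum_eq_single j]
      · rw [DirectSum.lof_apply]
        rfl
      · intro b _ hb
        exact DFinsupp.single_eq_of_ne hb.symm
      · intro h
        exact absurd hj h
    · have h0 : DomMulAct.mk ((DirectSum.component A I (fun _ => U) j) ∘ₗ g) = 0 := by
        have := Finsupp.notMem_support_iff.mp hj
        simpa using this
      have h1 : (DirectSum.component A I (fun _ => U) j) ∘ₗ g = 0 :=
        DomMulAct.mk.injective h0
      have h2 : g x j = 0 := by
        have := congrArg (fun (ψ : U →ₗ[A] U) => ψ x) h1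
        simp at this; exact this
      rw [h2, Finset.sum_eq_zero]
      intro b hb
      exact DFinsupp.single_eq_of_ne (fun h => hj (h ▸ hb))
  · intro f
    ext i
    dsimp only
    simp only [Finsupp.onFinset_apply]
    rw [show f i = DomMulAct.mk (DomMulAct.mk.symm (f i)) from (Equiv.apply_symm_apply _ _).symm]
    congr 1
    ext x
    rw [LinearMap.comp_apply, Finsupp.sum, LinearMap.sum_apply, map_sum]
    simp only [LinearMap.comp_apply]
    by_cases hi : i ∈ f.support
    · rw [Finset.sum_eq_single i]
      · exact DirectSum.component.lof_self A (M := fun _ : I => U) i _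
      · intro b _ hb
        exact DFinsupp.single_eq_of_ne hb.symm
      · intro h
        exact absurd hi h
    · have h0 : f i = 0 := Finsupp.notMem_support_iff.mp hi
      have hsz : ∀ b ∈ f.support, (DirectSum.component A I (fun _ => U) i)
          ((DirectSum.lof A I (fun _ => U) b) ((DomMulAct.mk.symm (f b)) x)) = 0 := by
        intro b hb
        have hne : b ≠ i := by rintro rfl; exact hi hb
        exact DFinsupp.single_eq_of_ne hne.symm
      rw [Finset.sum_eq_zero hsz, h0]
      rfl

end Aux
/-- For a simple module `U`, the direct sums `⊕_{i∈I} U` and `⊕_{j∈J} U` are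
isomorphic iff `I` and `J` have the same cardinality. -/
theorem directSum_copies_iso_iff {A U : Type*} [Ring A] [AddCommGroup U] [Module A U]
    (hU : IsSimpleModule A U) (I J : Type u) :
    Nonempty ((⨁ _ : I, U) ≃ₗ[A] (⨁ _ : J, U)) ↔ Cardinal.mk I = Cardinal.mk J := by
  classical
  constructor
  · rintro ⟨e⟩
    haveI := hU
    letI : DivisionRing (Module.End A U) := Module.End.instDivisionRing
    letI : DivisionRing (Module.End A U)ᵈᵐᵃ :=
      inferInstanceAs (DivisionRing (Module.End A U)ᵐᵒᵖ)
    let E : (U →ₗ[A] (⨁ _ : I, U)) ≃ₗ[(Module.End A U)ᵈᵐᵃ] (U →ₗ[A] (⨁ _ : J, U)) :=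
      { toFun := fun g => e.toLinearMap ∘ₗ g
        invFun := fun g => e.symm.toLinearMap ∘ₗ g
        map_add' := fun g₁ g₂ => by ext x; simp
        map_smul' := fun c g => by ext x; rfl
        left_inv := fun g => by ext x; simp
        right_inv := fun g => by ext x; simp }
    let F := (simpleHomEquiv hU I).symm ≪≫ₗ E ≪≫ₗ simpleHomEquiv hU J
    have h := F.rank_eq
    rw [rank_finsupp_self, rank_finsupp_self] at h
    exact Cardinal.lift_inj.mp h
  · intro h
    obtain ⟨f⟩ := Cardinal.eq.mp h
    exact ⟨DirectSum.lequivCongrLeft A f⟩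
end

section
/- Let A be a ring, V a left A-module, and (V_α)_{α < n} a family of simple submodules of V indexed by ordinals below n such that V is the internal direct sum of the V_α. Then the chain W_i = ⨆_{α < i} V_α (for i ≤ n) is a transfinite composition series: it is strictly increasing, starts at ⊥, ends at ⊤, takes suprema at limit ordinals, and each quotient W_{i+1}/W_i is a simple A-module (isomorphic to V_i). -/
/-- For a family of submodules `(Vα)_{α<n}` of `V` indexed by ordinals below
`n`, the submodule `⨆_{α < i} Vα`. -/
def supBelow {A V : Type*} [Ring A] [AddCommGroup V] [Module A V] {n : Ordinal}
    (Vα : {α : Ordinal // α < n} → Submodule A V) (i : Ordinal) : Submodule A V :=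
  ⨆ α : {α : Ordinal // α < n}, ⨆ _ : (α : Ordinal) < i, Vα α

section aux

variable {A V : Type*} [Ring A] [AddCommGroup V] [Module A V] {n : Ordinal}
    (Vα : {α : Ordinal // α < n} → Submodule A V)

theorem supBelow_mono : Monotone (supBelow Vα) := fun i j hij =>
  iSup_mono fun α => iSup_le fun h => le_iSup (fun _ : (α : Ordinal) < j => Vα α) (h.trans_le hij)

theorem le_supBelow {i : Ordinal} (α : {α : Ordinal // α < n}) (h : (α : Ordinal) < i) :
    Vα α ≤ supBelow Vα i :=
  le_iSup_of_le α (le_iSup (fun _ : (α : Ordinal) < i => Vα α) h)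

theorem supBelow_disjoint (hind : iSupIndep Vα) {i : Ordinal} (hi : i < n) :
    Disjoint (Vα ⟨i, hi⟩) (supBelow Vα i) := by
  refine (hind ⟨i, hi⟩).mono_right ?_
  refine iSup_le fun α => iSup_le fun hα => ?_
  refine le_iSup_of_le α (le_iSup (fun _ : α ≠ ⟨i, hi⟩ => Vα α) ?_)
  intro h
  exact absurd hα (by simp [h])

theorem supBelow_succ {i : Ordinal} (hi : i < n) :
    supBelow Vα (i + 1) = Vα ⟨i, hi⟩ ⊔ supBelow Vα i := by
  apply le_antisymm
  · refine iSup_le fun α => iSup_le fun hα => ?_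
    rcases lt_or_eq_of_le (Order.lt_add_one_iff.mp hα) with h | h
    · exact le_sup_of_le_right (le_supBelow Vα α h)
    · obtain ⟨a, ha⟩ := α
      simp only at h; subst h
      exact le_sup_left
  · refine sup_le (le_supBelow Vα ⟨i, hi⟩ (Order.lt_add_one_iff.mpr le_rfl)) ?_
    exact supBelow_mono Vα (le_of_lt (Order.lt_add_one_iff.mpr le_rfl))

end aux

set_option synthInstance.maxHeartbeats 1000000 in
/-- If `V` is the internal direct sum of simple submodules `(Vα)_{α<n}`, the
chain `W i = ⨆_{α<i} Vα` is a transfinite composition series: strictly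
increasing on `Iic n`, from `⊥` to `⊤`, taking suprema at limit ordinals, with
every factor `W (i+1) / W i` simple and isomorphic to `Vα i`. -/
theorem supBelow_transfinite_composition_series {A V : Type*} [Ring A]
    [AddCommGroup V] [Module A V] {n : Ordinal}
    (Vα : {α : Ordinal // α < n} → Submodule A V)
    (hint : DirectSum.IsInternal Vα)
    (hsimple : ∀ α, IsSimpleModule A (Vα α)) :
    StrictMonoOn (supBelow Vα) (Set.Iic n) ∧
    supBelow Vα 0 = ⊥ ∧
    supBelow Vα n = ⊤ ∧
    (∀ lam ≤ n, Order.IsSuccLimit lam →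
      supBelow Vα lam = ⨆ i < lam, supBelow Vα i) ∧
    (∀ (i : Ordinal) (hi : i < n),
      IsSimpleModule A
        (↥(supBelow Vα (i + 1)) ⧸
          Submodule.comap (supBelow Vα (i + 1)).subtype (supBelow Vα i)) ∧
      Nonempty
        ((↥(supBelow Vα (i + 1)) ⧸
            Submodule.comap (supBelow Vα (i + 1)).subtype (supBelow Vα i))
          ≃ₗ[A] ↥(Vα ⟨i, hi⟩))) := by
  have hind := hint.submodule_iSupIndep
  have hne : ∀ α, Vα α ≠ ⊥ := fun α => by
    have := hsimple α
    exact Submodule.nontrivial_iff_ne_bot.mp (IsSimpleModule.nontrivial A _)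
  refine ⟨?_, ?_, ?_, ?_, ?_⟩
  · intro i _ j hj hij
    have hi : i < n := lt_of_lt_of_le hij hj
    refine lt_of_le_of_ne (supBelow_mono Vα hij.le) fun h => ?_
    have h1 : Vα ⟨i, hi⟩ ≤ supBelow Vα j := le_supBelow Vα ⟨i, hi⟩ hij
    rw [← h] at h1
    exact hne ⟨i, hi⟩ ((supBelow_disjoint Vα hind hi).eq_bot_of_le h1)
  · simp [supBelow, not_lt_zero]
  · rw [← hint.submodule_iSup_eq_top]
    exact le_antisymm (iSup_le fun α => iSup_le fun _ => le_iSup Vα α)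
      (iSup_mono fun α => le_iSup (fun _ : (α : Ordinal) < n => Vα α) α.2)
  · intro lam _ hlim
    apply le_antisymm
    · refine iSup_le fun α => iSup_le fun hα => ?_
      exact le_iSup_of_le ((α : Ordinal) + 1) (le_iSup_of_le (hlim.add_one_lt hα)
        (le_supBelow Vα α (Order.lt_add_one_iff.mpr le_rfl)))
    · exact iSup_le fun i => iSup_le fun hi => supBelow_mono Vα hi.le
  · intro i hi
    set p := Vα ⟨i, hi⟩
    set p' := supBelow Vα i
    have hdisj : p ⊓ p' = ⊥ := (supBelow_disjoint Vα hind hi).eq_bot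
    have hbot : Submodule.comap p.subtype (p ⊓ p') = ⊥ := by
      rw [hdisj, Submodule.comap_bot, Submodule.ker_subtype]
    have hsq : supBelow Vα (i + 1) = p ⊔ p' := supBelow_succ Vα hi
    rw [hsq]
    have e : (↥(p ⊔ p') ⧸ Submodule.comap (p ⊔ p').subtype p') ≃ₗ[A] ↥p :=
      (LinearMap.quotientInfEquivSupQuotient p p').symm.trans
        (Submodule.quotEquivOfEqBot _ hbot)
    exact ⟨(hsimple ⟨i, hi⟩).congr e, ⟨e⟩⟩
end
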